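/- Let Ω be a nonempty finite type with probability weights p : Ω → ℝ (p ω > 0 for all ω, ∑_ω p ω = 1), ξ : Ω → (ι → ℝ), and let Θ̃ be concave on a convex set S ⊆ (ι → ℝ) containing the range of ξ. Let C be a nonempty finite subset of Ω and let C₁, …, C_m be pairwise disjoint nonempty finite sets whose union is C. Then ∑_{j=1}^{m} P(C_j) · Θ̃(μ_{C_j}) ≤ P(C) · Θ̃(μ_C); i.e., subdividing a single cell can only decrease that cell's contribution to the penalized mean-value upper bound. -/
import Mathlib


/-- The single-cell step underlying Corollary 3: for a concave (penalized)
function `Θt`, subdividing a cell `C` into pairwise disjoint nonempty cells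
`D 1, …, D m` whose union is `C` can only decrease that cell's contribution to
the penalized mean-value upper bound. -/
theorem subdividing_cell_decreases_upper_bound
    {Ω ι : Type*} [Fintype Ω] [DecidableEq Ω] [Nonempty Ω] [Fintype ι]
    (p : Ω → ℝ) (hp : ∀ ω, 0 < p ω) (hsum : ∑ ω, p ω = 1)
    (ξ : Ω → ι → ℝ) (S : Set (ι → ℝ)) (hS : Convex ℝ S)
    (hξS : ∀ ω, ξ ω ∈ S)
    (Θt : (ι → ℝ) → ℝ) (hΘt : ConcaveOn ℝ S Θt)
    (C : Finset Ω) (hC : C.Nonempty)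
    (m : ℕ) (D : Fin m → Finset Ω)
    (hDne : ∀ j, (D j).Nonempty)
    (hdisj : Pairwise fun j k => Disjoint (D j) (D k))
    (hunion : Finset.univ.biUnion D = C) :
    (∑ j : Fin m,
        (∑ ω ∈ D j, p ω) * Θt ((∑ ω ∈ D j, p ω)⁻¹ • ∑ ω ∈ D j, p ω • ξ ω)) ≤
      (∑ ω ∈ C, p ω) * Θt ((∑ ω ∈ C, p ω)⁻¹ • ∑ ω ∈ C, p ω • ξ ω) := by
  -- positivity of cell probabilities
  have hPpos : ∀ (T : Finset Ω), T.Nonempty → 0 < ∑ ω ∈ T, p ω := fun T hT =>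
    Finset.sum_pos (fun ω _ => hp ω) hT
  have hPC : 0 < ∑ ω ∈ C, p ω := hPpos C hC
  have hPD : ∀ j, 0 < ∑ ω ∈ D j, p ω := fun j => hPpos _ (hDne j)
  -- conditional means lie in S
  have hmean : ∀ (T : Finset Ω), T.Nonempty →
      (∑ ω ∈ T, p ω)⁻¹ • (∑ ω ∈ T, p ω • ξ ω) ∈ S := by
    intro T hT
    have hPT := hPpos T hT
    have : (∑ ω ∈ T, p ω)⁻¹ • (∑ ω ∈ T, p ω • ξ ω)
        = ∑ ω ∈ T, ((∑ ω' ∈ T, p ω')⁻¹ * p ω) • ξ ω := by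
      rw [Finset.smul_sum]
      exact Finset.sum_congr rfl fun ω _ => by rw [smul_smul]
    rw [this]
    refine hS.sum_mem (fun ω _ => mul_nonneg (inv_nonneg.2 hPT.le) (hp ω).le) ?_ (fun ω _ => hξS ω)
    rw [← Finset.mul_sum, inv_mul_cancel₀ hPT.ne']
  -- split C-sums via the partition
  have hsplit : ∀ (f : Ω → ℝ), ∑ ω ∈ C, f ω = ∑ j : Fin m, ∑ ω ∈ D j, f ω := by
    intro f
    rw [← hunion, Finset.sum_biUnion]
    intro a _ b _ hab
    exact hdisj hab
  have hsplitV : (∑ ω ∈ C, p ω • ξ ω) = ∑ j : Fin m, ∑ ω ∈ D j, p ω • ξ ω := by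
    rw [← hunion, Finset.sum_biUnion]
    intro a _ b _ hab
    exact hdisj hab
  set P := ∑ ω ∈ C, p ω with hPdef
  -- weights for Jensen
  set w : Fin m → ℝ := fun j => (∑ ω ∈ D j, p ω) / P with hw
  set x : Fin m → (ι → ℝ) := fun j =>
    (∑ ω ∈ D j, p ω)⁻¹ • ∑ ω ∈ D j, p ω • ξ ω with hx
  have hw0 : ∀ j ∈ Finset.univ, (0:ℝ) ≤ w j := fun j _ =>
    div_nonneg (hPD j).le hPC.le
  have hw1 : ∑ j : Fin m, w j = 1 := by
    simp only [hw, ← Finset.sum_div]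
    rw [← hsplit p, div_self hPC.ne']
  have hxS : ∀ j ∈ Finset.univ, x j ∈ S := fun j _ => hmean _ (hDne j)
  have hjensen := hΘt.le_map_sum hw0 hw1 hxS
  have hcomb : (∑ j : Fin m, w j • x j) = P⁻¹ • ∑ ω ∈ C, p ω • ξ ω := by
    rw [hsplitV, Finset.smul_sum]
    refine Finset.sum_congr rfl fun j _ => ?_
    simp only [hw, hx, smul_smul, div_eq_mul_inv]
    rw [mul_comm (∑ ω ∈ D j, p ω) P⁻¹, mul_assoc,
      mul_inv_cancel₀ (hPD j).ne', mul_one]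
  rw [hcomb] at hjensen
  calc (∑ j : Fin m, (∑ ω ∈ D j, p ω) * Θt (x j))
      = P * ∑ j : Fin m, w j • Θt (x j) := by
        rw [Finset.mul_sum]
        refine Finset.sum_congr rfl fun j _ => ?_
        simp only [hw, smul_eq_mul]
        field_simp
    _ ≤ P * Θt (P⁻¹ • ∑ ω ∈ C, p ω • ξ ω) := by
        exact mul_le_mul_of_nonneg_left hjensen hPC.le
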